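/- arXiv:2005.09725 — 4 statements merged into one kernel-verified Lean document; each statement's English description precedes it below -/
import Mathlib

section
/- Equivalence of TGV² for different weights: for any two parameter pairs α = (α₀, α₁) and α̃ = (α̃₀, α̃₁) with all entries positive, and every locally integrable u : Ω → ℝ, one has min(α̃₀/α₀, α̃₁/α₁) · TGV²_α(u) ≤ TGV²_α̃(u) ≤ max(α̃₀/α₀, α̃₁/α₁) · TGV²_α(u) (inequalities in [0,∞]). In particular TGV²_α and TGV²_α̃ are equivalent functionals. -/
open MeasureTheory Filter Topology
open scoped ENNReal

noncomputable section

/-- Partial derivative `∂f/∂x_j` of a scalar function on `ℝ^d`. -/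
def pd {d : ℕ} (j : Fin d) (f : (Fin d → ℝ) → ℝ) (x : Fin d → ℝ) : ℝ :=
  fderiv ℝ f x (Pi.single j 1)

/-- Divergence of a matrix field: `(div v)_i = ∑_j ∂v_ij/∂x_j`. -/
def mdiv {d : ℕ} (v : (Fin d → ℝ) → Fin d → Fin d → ℝ) (x : Fin d → ℝ) (i : Fin d) : ℝ :=
  ∑ j, pd j (fun y => v y i j) x

/-- Second divergence `div² v = ∑_{i,j} ∂²v_ij/∂x_i∂x_j`. -/
def mdiv2 {d : ℕ} (v : (Fin d → ℝ) → Fin d → Fin d → ℝ) (x : Fin d → ℝ) : ℝ :=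
  ∑ i, ∑ j, pd i (pd j (fun y => v y i j)) x

/-- Euclidean norm of a vector in `ℝ^d`. -/
def enorm2 {d : ℕ} (w : Fin d → ℝ) : ℝ := Real.sqrt (∑ i, (w i) ^ 2)

/-- Frobenius-type norm of a symmetric matrix: `(∑_i |M_ii|² + 2 ∑_{i<j} |M_ij|²)^(1/2)`. -/
def fnorm2 {d : ℕ} (M : Fin d → Fin d → ℝ) : ℝ :=
  Real.sqrt ((∑ i, (M i i) ^ 2) + 2 * ∑ i, ∑ j, if i < j then (M i j) ^ 2 else 0)

/-- Admissible test fields for second-order TGV: `v ∈ C_c²(Ω, S^{d×d})`,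
`‖v‖_∞ ≤ α₀`, `‖div v‖_∞ ≤ α₁`. -/
def TGVtest {d : ℕ} (Ω : Set (Fin d → ℝ)) (α₀ α₁ : ℝ)
    (v : (Fin d → ℝ) → Fin d → Fin d → ℝ) : Prop :=
  ContDiff ℝ 2 v ∧ HasCompactSupport v ∧ tsupport v ⊆ Ω ∧
    (∀ x i j, v x i j = v x j i) ∧
    (∀ x ∈ Ω, fnorm2 (v x) ≤ α₀) ∧
    (∀ x ∈ Ω, enorm2 (mdiv v x) ≤ α₁)

/-- Second-order Total Generalized Variation. -/
def TGV2 {d : ℕ} (Ω : Set (Fin d → ℝ)) (α₀ α₁ : ℝ) (u : (Fin d → ℝ) → ℝ) : ℝ≥0∞ :=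
  ⨆ (v) (_ : TGVtest Ω α₀ α₁ v), ENNReal.ofReal (∫ x in Ω, u x * mdiv2 v x)

/-- Admissible test fields for the total variation: `φ ∈ C_c¹(Ω, ℝ^d)`, `‖φ‖_∞ ≤ 1`. -/
def TVtest {d : ℕ} (Ω : Set (Fin d → ℝ)) (φ : (Fin d → ℝ) → Fin d → ℝ) : Prop :=
  ContDiff ℝ 1 φ ∧ HasCompactSupport φ ∧ tsupport φ ⊆ Ω ∧ ∀ x ∈ Ω, enorm2 (φ x) ≤ 1

/-- Divergence of a vector field. -/
def vdiv {d : ℕ} (φ : (Fin d → ℝ) → Fin d → ℝ) (x : Fin d → ℝ) : ℝ :=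
  ∑ j, pd j (fun y => φ y j) x

/-- Total variation. -/
def TVar {d : ℕ} (Ω : Set (Fin d → ℝ)) (u : (Fin d → ℝ) → ℝ) : ℝ≥0∞ :=
  ⨆ (φ) (_ : TVtest Ω φ), ENNReal.ofReal (∫ x in Ω, u x * vdiv φ x)

/-- Radon norm `‖Du - w‖_M` of the distributional derivative of `u` minus `w`. -/
def MnormDuSub {d : ℕ} (Ω : Set (Fin d → ℝ)) (u : (Fin d → ℝ) → ℝ)
    (w : (Fin d → ℝ) → Fin d → ℝ) : ℝ≥0∞ :=
  ⨆ (φ) (_ : TVtest Ω φ),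
    ENNReal.ofReal (∫ x in Ω, (u x * vdiv φ x + ∑ i, w x i * φ x i))

/-- Test fields for the Radon norm of the symmetrized derivative:
`v ∈ C_c²(Ω, S^{d×d})` with `‖v‖_∞ ≤ 1`. -/
def Etest {d : ℕ} (Ω : Set (Fin d → ℝ)) (v : (Fin d → ℝ) → Fin d → Fin d → ℝ) : Prop :=
  ContDiff ℝ 2 v ∧ HasCompactSupport v ∧ tsupport v ⊆ Ω ∧
    (∀ x i j, v x i j = v x j i) ∧ (∀ x ∈ Ω, fnorm2 (v x) ≤ 1)

/-- Radon norm `‖ℰw‖_M` of the distributional symmetrized derivative of `w`. -/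
def MnormEw {d : ℕ} (Ω : Set (Fin d → ℝ)) (w : (Fin d → ℝ) → Fin d → ℝ) : ℝ≥0∞ :=
  ⨆ (v) (_ : Etest Ω v), ENNReal.ofReal (∫ x in Ω, ∑ i, w x i * mdiv v x i)


lemma pd_const_mul {d : ℕ} (j : Fin d) (f : (Fin d → ℝ) → ℝ) (c : ℝ) (x : Fin d → ℝ)
    (hf : DifferentiableAt ℝ f x) :
    pd j (fun y => c * f y) x = c * pd j f x := by
  unfold pd
  rw [fderiv_const_mul hf]
  simp

lemma apply_contDiff {d : ℕ} (v : (Fin d → ℝ) → Fin d → Fin d → ℝ)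
    (hv : ContDiff ℝ 2 v) (i j : Fin d) : ContDiff ℝ 2 (fun y => v y i j) :=
  contDiff_pi.mp (contDiff_pi.mp hv i) j

lemma pd_contDiff_one {d : ℕ} (j : Fin d) (f : (Fin d → ℝ) → ℝ)
    (hf : ContDiff ℝ 2 f) : ContDiff ℝ 1 (pd j f) := by
  have h1 : ContDiff ℝ 1 (fderiv ℝ f) := hf.fderiv_right (by norm_num)
  exact (ContinuousLinearMap.apply ℝ ℝ (Pi.single j 1 : Fin d → ℝ)).contDiff.comp h1

lemma mdiv_smul {d : ℕ} (c : ℝ) (v : (Fin d → ℝ) → Fin d → Fin d → ℝ)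
    (hv : ContDiff ℝ 2 v) (x : Fin d → ℝ) (i : Fin d) :
    mdiv (fun y i j => c * v y i j) x i = c * mdiv v x i := by
  unfold mdiv
  rw [Finset.mul_sum]
  refine Finset.sum_congr rfl fun j _ => ?_
  exact pd_const_mul j _ c x ((apply_contDiff v hv i j).differentiable (by norm_num) x)

lemma mdiv2_smul {d : ℕ} (c : ℝ) (v : (Fin d → ℝ) → Fin d → Fin d → ℝ)
    (hv : ContDiff ℝ 2 v) (x : Fin d → ℝ) :
    mdiv2 (fun y i j => c * v y i j) x = c * mdiv2 v x := by
  unfold mdiv2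
  rw [Finset.mul_sum]
  refine Finset.sum_congr rfl fun i _ => ?_
  rw [Finset.mul_sum]
  refine Finset.sum_congr rfl fun j _ => ?_
  have hf : ContDiff ℝ 2 (fun y => v y i j) := apply_contDiff v hv i j
  have h1 : (pd j fun y => c * v y i j) = fun y => c * pd j (fun y => v y i j) y := by
    funext y
    exact pd_const_mul j _ c y (hf.differentiable (by norm_num) y)
  rw [h1]
  exact pd_const_mul i _ c x ((pd_contDiff_one j _ hf).differentiable (by norm_num) x)

lemma enorm2_smul {d : ℕ} (c : ℝ) (hc : 0 ≤ c) (w : Fin d → ℝ) :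
    enorm2 (fun i => c * w i) = c * enorm2 w := by
  unfold enorm2
  have key : (∑ i, (c * w i) ^ 2) = c ^ 2 * ∑ i, (w i) ^ 2 := by
    rw [Finset.mul_sum]; exact Finset.sum_congr rfl fun i _ => by ring
  rw [key, Real.sqrt_mul (sq_nonneg c), Real.sqrt_sq hc]

lemma fnorm2_smul {d : ℕ} (c : ℝ) (hc : 0 ≤ c) (M : Fin d → Fin d → ℝ) :
    fnorm2 (fun i j => c * M i j) = c * fnorm2 M := by
  unfold fnorm2
  have key : ((∑ i, (c * M i i) ^ 2) + 2 * ∑ i, ∑ j, if i < j then (c * M i j) ^ 2 else 0)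
      = c ^ 2 * ((∑ i, (M i i) ^ 2) + 2 * ∑ i, ∑ j, if i < j then (M i j) ^ 2 else 0) := by
    have h1 : (∑ i, (c * M i i) ^ 2) = c ^ 2 * ∑ i, (M i i) ^ 2 := by
      rw [Finset.mul_sum]; exact Finset.sum_congr rfl fun i _ => by ring
    have h2 : (∑ i, ∑ j, if i < j then (c * M i j) ^ 2 else 0)
        = c ^ 2 * ∑ i, ∑ j, if i < j then (M i j) ^ 2 else 0 := by
      rw [Finset.mul_sum]
      refine Finset.sum_congr rfl fun i _ => ?_
      rw [Finset.mul_sum]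
      refine Finset.sum_congr rfl fun j _ => ?_
      split <;> ring
    rw [h1, h2]; ring
  show Real.sqrt ((∑ i, (c * M i i) ^ 2) + 2 * ∑ i, ∑ j, if i < j then (c * M i j) ^ 2 else 0)
      = c * Real.sqrt _
  rw [key, Real.sqrt_mul (sq_nonneg c), Real.sqrt_sq hc]

lemma tgv2_smul_le {d : ℕ} (Ω : Set (Fin d → ℝ)) (α₀ α₁ β₀ β₁ c : ℝ) (hc : 0 < c)
    (h0 : c * α₀ ≤ β₀) (h1 : c * α₁ ≤ β₁) (u : (Fin d → ℝ) → ℝ) :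
    ENNReal.ofReal c * TGV2 Ω α₀ α₁ u ≤ TGV2 Ω β₀ β₁ u := by
  unfold TGV2
  rw [ENNReal.mul_iSup]
  refine iSup_le fun v => ?_
  rw [ENNReal.mul_iSup]
  refine iSup_le fun hv => ?_
  obtain ⟨hcd, hcs, hts, hsym, hf, he⟩ := hv
  set w : (Fin d → ℝ) → Fin d → Fin d → ℝ := fun y i j => c * v y i j with hw
  have hsupp : Function.support w ⊆ Function.support v := by
    intro x hx
    simp only [Function.mem_support] at hx ⊢
    intro h
    apply hx
    funext i j
    simp [hw, h]
  have hts' : tsupport w ⊆ tsupport v := closure_mono hsupp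
  have hwtest : TGVtest Ω β₀ β₁ w := by
    refine ⟨?_, ?_, hts'.trans hts, fun x i j => by simp [hw, hsym x i j], ?_, ?_⟩
    · exact hcd.const_smul c
    · exact IsCompact.of_isClosed_subset hcs isClosed_closure hts'
    · intro x hx
      have : fnorm2 (w x) = c * fnorm2 (v x) := fnorm2_smul c hc.le (v x)
      rw [this]
      calc c * fnorm2 (v x) ≤ c * α₀ := by
            exact mul_le_mul_of_nonneg_left (hf x hx) hc.le
        _ ≤ β₀ := h0
    · intro x hx
      have : mdiv w x = fun i => c * mdiv v x i := by
        funext i; exact mdiv_smul c v hcd x i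
      rw [this, enorm2_smul c hc.le]
      calc c * enorm2 (mdiv v x) ≤ c * α₁ := mul_le_mul_of_nonneg_left (he x hx) hc.le
        _ ≤ β₁ := h1
  refine le_iSup_of_le w (le_iSup_of_le hwtest (le_of_eq ?_))
  rw [← ENNReal.ofReal_mul hc.le]
  congr 1
  rw [← integral_const_mul]
  refine integral_congr_ae (Filter.Eventually.of_forall fun x => ?_)
  show c * (u x * mdiv2 v x) = u x * mdiv2 w x
  rw [hw, mdiv2_smul c v hcd x]
  ring

/-- Equivalence of TGV² for different positive weights. -/
theorem tgv2_weights_equiv {d : ℕ} (hd : 1 ≤ d) (Ω : Set (Fin d → ℝ))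
    (hΩo : IsOpen Ω) (hΩb : Bornology.IsBounded Ω)
    (α₀ α₁ β₀ β₁ : ℝ) (hα₀ : 0 < α₀) (hα₁ : 0 < α₁) (hβ₀ : 0 < β₀) (hβ₁ : 0 < β₁)
    (u : (Fin d → ℝ) → ℝ) (hu : LocallyIntegrableOn u Ω) :
    ENNReal.ofReal (min (β₀ / α₀) (β₁ / α₁)) * TGV2 Ω α₀ α₁ u ≤ TGV2 Ω β₀ β₁ u ∧
    TGV2 Ω β₀ β₁ u ≤ ENNReal.ofReal (max (β₀ / α₀) (β₁ / α₁)) * TGV2 Ω α₀ α₁ u := by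
  constructor
  · set c := min (β₀ / α₀) (β₁ / α₁) with hc
    have hcpos : 0 < c := lt_min (div_pos hβ₀ hα₀) (div_pos hβ₁ hα₁)
    refine tgv2_smul_le Ω α₀ α₁ β₀ β₁ c hcpos ?_ ?_ u
    · calc c * α₀ ≤ (β₀ / α₀) * α₀ :=
            mul_le_mul_of_nonneg_right (min_le_left _ _) hα₀.le
        _ = β₀ := div_mul_cancel₀ β₀ hα₀.ne'
    · calc c * α₁ ≤ (β₁ / α₁) * α₁ :=
            mul_le_mul_of_nonneg_right (min_le_right _ _) hα₁.le
        _ = β₁ := div_mul_cancel₀ β₁ hα₁.ne'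
  · set c := min (α₀ / β₀) (α₁ / β₁) with hc
    have hcpos : 0 < c := lt_min (div_pos hα₀ hβ₀) (div_pos hα₁ hβ₁)
    have key : ENNReal.ofReal c * TGV2 Ω β₀ β₁ u ≤ TGV2 Ω α₀ α₁ u := by
      refine tgv2_smul_le Ω β₀ β₁ α₀ α₁ c hcpos ?_ ?_ u
      · calc c * β₀ ≤ (α₀ / β₀) * β₀ :=
              mul_le_mul_of_nonneg_right (min_le_left _ _) hβ₀.le
          _ = α₀ := div_mul_cancel₀ α₀ hβ₀.ne'
      · calc c * β₁ ≤ (α₁ / β₁) * β₁ :=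
              mul_le_mul_of_nonneg_right (min_le_right _ _) hβ₁.le
          _ = α₁ := div_mul_cancel₀ α₁ hβ₁.ne'
    set m := max (β₀ / α₀) (β₁ / α₁) with hm
    have hmc : m * c = 1 := by
      rcases le_total (β₀ / α₀) (β₁ / α₁) with h | h
      · have h' : α₁ / β₁ ≤ α₀ / β₀ := by
          rw [div_le_div_iff₀ hβ₁ hβ₀] at *
          rw [div_le_div_iff₀ hα₀ hα₁] at h
          nlinarith
        rw [hm, hc, max_eq_right h, min_eq_right h']
        field_simp
      · have h' : α₀ / β₀ ≤ α₁ / β₁ := by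
          rw [div_le_div_iff₀ hβ₀ hβ₁] at *
          rw [div_le_div_iff₀ hα₁ hα₀] at h
          nlinarith
        rw [hm, hc, max_eq_left h, min_eq_left h']
        field_simp
    calc TGV2 Ω β₀ β₁ u = 1 * TGV2 Ω β₀ β₁ u := (one_mul _).symm
      _ = (ENNReal.ofReal m * ENNReal.ofReal c) * TGV2 Ω β₀ β₁ u := by
          rw [← ENNReal.ofReal_mul (le_of_lt (lt_of_lt_of_le (div_pos hβ₀ hα₀) (le_max_left _ _))),
            hmc, ENNReal.ofReal_one]
      _ = ENNReal.ofReal m * (ENNReal.ofReal c * TGV2 Ω β₀ β₁ u) := by rw [mul_assoc]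
      _ ≤ ENNReal.ofReal m * TGV2 Ω α₀ α₁ u := mul_le_mul_right key _

end
end

section
/- Lower semicontinuity of second-order TGV on Lᵖ: let 1 ≤ p < ∞. If (uₙ) is a sequence in Lᵖ(Ω) converging to u strongly in Lᵖ(Ω), then TGV²_α(u) ≤ liminf_{n→∞} TGV²_α(uₙ) (liminf taken in [0,∞]). -/
open MeasureTheory Filter Topology
open scoped ENNReal

noncomputable section

section Aux

private lemma pd_contDiff' {d : ℕ} {n : ℕ} (j : Fin d) {f : (Fin d → ℝ) → ℝ}
    (hf : ContDiff ℝ (n + 1) f) : ContDiff ℝ n (pd j f) :=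
  (hf.fderiv_right (by norm_cast)).clm_apply contDiff_const

private lemma pd_zero_of_not_mem {d : ℕ} (j : Fin d) {f : (Fin d → ℝ) → ℝ} {x : Fin d → ℝ}
    (hx : x ∉ tsupport f) : pd j f x = 0 := by
  have : fderiv ℝ f x = 0 := by
    have h0 : f =ᶠ[nhds x] 0 := notMem_tsupport_iff_eventuallyEq.mp hx
    rw [h0.fderiv_eq]; exact fderiv_const_apply 0
  simp [pd, this]

private lemma pd_tsupport_subset {d : ℕ} (j : Fin d) (f : (Fin d → ℝ) → ℝ) :
    tsupport (pd j f) ⊆ tsupport f := by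
  refine closure_minimal (fun x hx => ?_) isClosed_closure
  by_contra h
  exact hx (pd_zero_of_not_mem j h)

private lemma comp_contDiff' {d : ℕ} {v : (Fin d → ℝ) → Fin d → Fin d → ℝ} (i j : Fin d)
    (hv : ContDiff ℝ 2 v) : ContDiff ℝ 2 (fun y => v y i j) :=
  (((ContinuousLinearMap.proj (R := ℝ) (φ := fun _ : Fin d => ℝ) j).comp
    (ContinuousLinearMap.proj (R := ℝ) (φ := fun _ : Fin d => Fin d → ℝ) i)).contDiff).comp hv

private lemma comp_tsupport_subset {d : ℕ} {v : (Fin d → ℝ) → Fin d → Fin d → ℝ} (i j : Fin d) :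
    tsupport (fun y => v y i j) ⊆ tsupport v := by
  refine closure_mono (fun x hx => ?_)
  simp only [Function.mem_support] at hx ⊢
  intro h; rw [h] at hx; exact hx rfl

private lemma mdiv2_continuous {d : ℕ} {v : (Fin d → ℝ) → Fin d → Fin d → ℝ}
    (hv : ContDiff ℝ 2 v) : Continuous (mdiv2 v) := by
  have : mdiv2 v = fun x => ∑ i, ∑ j, pd i (pd j (fun y => v y i j)) x := rfl
  rw [this]
  refine continuous_finset_sum _ fun i _ => continuous_finset_sum _ fun j _ => ?_
  have h2 : ContDiff ℝ ((1 : ℕ) + 1) (fun y => v y i j) := by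
    exact_mod_cast comp_contDiff' i j hv
  have h1 : ContDiff ℝ ((0 : ℕ) + 1) (pd j (fun y => v y i j)) := by
    exact_mod_cast pd_contDiff' j h2
  exact (pd_contDiff' i h1).continuous

private lemma mdiv2_hasCompactSupport {d : ℕ} {v : (Fin d → ℝ) → Fin d → Fin d → ℝ}
    (hvs : HasCompactSupport v) : HasCompactSupport (mdiv2 v) := by
  refine hvs.mono' fun x hx => ?_
  by_contra h
  apply hx
  have : mdiv2 v x = 0 := by
    unfold mdiv2
    refine Finset.sum_eq_zero fun i _ => Finset.sum_eq_zero fun j _ => ?_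
    refine pd_zero_of_not_mem i fun hmem => h ?_
    exact comp_tsupport_subset i j (pd_tsupport_subset j _ hmem)
  simpa [Function.mem_support] using this
  
private lemma tendsto_integral_mul_of_Lp {d : ℕ} (Ω : Set (Fin d → ℝ))
    (hΩb : Bornology.IsBounded Ω) (p : ℝ) (hp : 1 ≤ p)
    (u : ℕ → (Fin d → ℝ) → ℝ) (u₀ : (Fin d → ℝ) → ℝ)
    (hu : ∀ n, MemLp (u n) (ENNReal.ofReal p) (volume.restrict Ω))
    (hu₀ : MemLp u₀ (ENNReal.ofReal p) (volume.restrict Ω))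
    (hconv : Tendsto (fun n => eLpNorm (u n - u₀) (ENNReal.ofReal p) (volume.restrict Ω))
      atTop (𝓝 0))
    (g : (Fin d → ℝ) → ℝ) (hgc : Continuous g) (hgs : HasCompactSupport g) :
    Tendsto (fun n => ∫ x in Ω, u n x * g x) atTop (𝓝 (∫ x in Ω, u₀ x * g x)) := by
  haveI : IsFiniteMeasure (volume.restrict Ω) :=
    ⟨by simpa [Measure.restrict_apply] using hΩb.measure_lt_top⟩
  obtain ⟨C, hC⟩ := hgs.exists_bound_of_continuous hgc
  have hC0 : 0 ≤ C := le_trans (norm_nonneg _) (hC (fun _ => 0))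
  have h1p : (1 : ℝ≥0∞) ≤ ENNReal.ofReal p := by
    rw [← ENNReal.ofReal_one]; exact ENNReal.ofReal_le_ofReal hp
  have hint : ∀ w : (Fin d → ℝ) → ℝ, MemLp w (ENNReal.ofReal p) (volume.restrict Ω) →
      Integrable (fun x => w x * g x) (volume.restrict Ω) := by
    intro w hw
    have := Integrable.bdd_mul (c := C) (hw.integrable h1p)
      (hgc.aestronglyMeasurable) (Filter.Eventually.of_forall hC)
    simpa [mul_comm] using this
  have hmeas : ∀ n, AEStronglyMeasurable (u n - u₀) (volume.restrict Ω) :=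
    fun n => ((hu n).sub hu₀).aestronglyMeasurable
  have hL1 : Tendsto (fun n => eLpNorm (u n - u₀) 1 (volume.restrict Ω)) atTop (𝓝 0) := by
    set c : ℝ≥0∞ := (volume.restrict Ω) Set.univ ^ (1 / (1:ℝ≥0∞).toReal - 1 / (ENNReal.ofReal p).toReal) with hc
    have hcne : c ≠ ⊤ := by
      apply ENNReal.rpow_ne_top_of_nonneg
      · rw [ENNReal.toReal_ofReal (le_trans zero_le_one hp)]
        simp only [ENNReal.toReal_one]
        have : 1 / p ≤ 1 := by
          rw [div_le_one (lt_of_lt_of_le zero_lt_one hp)]; exact hp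
        linarith
      · simp only [Measure.restrict_apply_univ]
        exact hΩb.measure_lt_top.ne
    have hmul : Tendsto (fun n => eLpNorm (u n - u₀) (ENNReal.ofReal p) (volume.restrict Ω) * c)
        atTop (𝓝 0) := by
      have := ENNReal.Tendsto.mul_const hconv (Or.inr hcne)
      simpa using this
    refine tendsto_of_tendsto_of_tendsto_of_le_of_le tendsto_const_nhds hmul
      (fun n => zero_le') (fun n => ?_)
    exact eLpNorm_le_eLpNorm_mul_rpow_measure_univ h1p (hmeas n)
  have hL1' : Tendsto (fun n => ∫ x in Ω, ‖u n x - u₀ x‖) atTop (𝓝 0) := by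
    have heq : ∀ n, ENNReal.ofReal (∫ x in Ω, ‖u n x - u₀ x‖)
        = eLpNorm (u n - u₀) 1 (volume.restrict Ω) := by
      intro n
      rw [eLpNorm_one_eq_lintegral_enorm,
        ← ofReal_integral_norm_eq_lintegral_enorm (((hu n).sub hu₀).integrable h1p)]
      rfl
    have : Tendsto (fun n => (ENNReal.ofReal (∫ x in Ω, ‖u n x - u₀ x‖)).toReal) atTop
        (𝓝 (0:ℝ≥0∞).toReal) := by
      refine (ENNReal.tendsto_toReal (by simp)).comp ?_
      simpa only [heq] using hL1
    simp only [ENNReal.toReal_zero] at this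
    refine this.congr fun n => ?_
    exact ENNReal.toReal_ofReal (integral_nonneg fun x => norm_nonneg _)
  rw [tendsto_iff_norm_sub_tendsto_zero]
  have hlim : Tendsto (fun n => C * ∫ x in Ω, ‖u n x - u₀ x‖) atTop (𝓝 0) := by
    simpa using hL1'.const_mul C
  refine squeeze_zero (fun n => norm_nonneg _) (fun n => ?_) hlim
  have hsub : (∫ x in Ω, u n x * g x) - ∫ x in Ω, u₀ x * g x
      = ∫ x in Ω, (u n x - u₀ x) * g x := by
    rw [← integral_sub (hint _ (hu n)) (hint _ hu₀)]
    congr 1; ext x; ring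
  rw [hsub]
  calc ‖∫ x in Ω, (u n x - u₀ x) * g x‖
      ≤ ∫ x in Ω, ‖(u n x - u₀ x) * g x‖ := norm_integral_le_integral_norm _
    _ ≤ ∫ x in Ω, C * ‖u n x - u₀ x‖ := by
        refine integral_mono_of_nonneg (Filter.Eventually.of_forall fun x => norm_nonneg _)
          ((((hu n).sub hu₀).integrable h1p).norm.const_mul C)
          (Filter.Eventually.of_forall fun x => ?_)
        simp only
        rw [norm_mul, mul_comm]
        exact mul_le_mul_of_nonneg_right (hC x) (norm_nonneg _)
    _ = C * ∫ x in Ω, ‖u n x - u₀ x‖ := by rw [integral_const_mul]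

end Aux

/-- Lower semicontinuity of second-order TGV on `Lᵖ(Ω)`, `1 ≤ p < ∞`. -/
theorem tgv2_lsc_Lp {d : ℕ} (hd : 1 ≤ d) (Ω : Set (Fin d → ℝ))
    (hΩo : IsOpen Ω) (hΩb : Bornology.IsBounded Ω)
    (α₀ α₁ : ℝ) (hα₀ : 0 < α₀) (hα₁ : 0 < α₁)
    (p : ℝ) (hp : 1 ≤ p)
    (u : ℕ → (Fin d → ℝ) → ℝ) (u₀ : (Fin d → ℝ) → ℝ)
    (hu : ∀ n, MemLp (u n) (ENNReal.ofReal p) (volume.restrict Ω))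
    (hu₀ : MemLp u₀ (ENNReal.ofReal p) (volume.restrict Ω))
    (hconv : Tendsto (fun n => eLpNorm (u n - u₀) (ENNReal.ofReal p) (volume.restrict Ω))
      atTop (𝓝 0)) :
    TGV2 Ω α₀ α₁ u₀ ≤ Filter.liminf (fun n => TGV2 Ω α₀ α₁ (u n)) atTop := by
  simp only [TGV2]
  refine iSup_le fun v => iSup_le fun hv => ?_
  have hT : Tendsto (fun n => ∫ x in Ω, u n x * mdiv2 v x) atTop
      (𝓝 (∫ x in Ω, u₀ x * mdiv2 v x)) :=
    tendsto_integral_mul_of_Lp Ω hΩb p hp u u₀ hu hu₀ hconv (mdiv2 v)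
      (mdiv2_continuous hv.1) (mdiv2_hasCompactSupport hv.2.1)
  have hT' : Tendsto (fun n => ENNReal.ofReal (∫ x in Ω, u n x * mdiv2 v x)) atTop
      (𝓝 (ENNReal.ofReal (∫ x in Ω, u₀ x * mdiv2 v x))) :=
    (ENNReal.continuous_ofReal.tendsto _).comp hT
  calc ENNReal.ofReal (∫ x in Ω, u₀ x * mdiv2 v x)
      = Filter.liminf (fun n => ENNReal.ofReal (∫ x in Ω, u n x * mdiv2 v x)) atTop :=
        hT'.liminf_eq.symm
    _ ≤ Filter.liminf (fun n => TGV2 Ω α₀ α₁ (u n)) atTop := by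
        refine liminf_le_liminf (Filter.Eventually.of_forall fun n => ?_)
        simp only [TGV2]
        exact le_iSup₂ (f := fun w (_ : TGVtest Ω α₀ α₁ w) =>
          ENNReal.ofReal (∫ x in Ω, u n x * mdiv2 w x)) v hv


end
end

section
/- Uniform control of TV by the distance of Du to rigid displacements: assume Ω is in addition connected. Then there exists a constant C₁ > 0 such that for every u ∈ L¹(Ω) and every skew-symmetric matrix A ∈ ℝ^{d×d} (Aᵀ = −A) and b ∈ ℝ^d, with w̄(x) := A x + b, one has TV(u) ≤ C₁ ( ‖Du − w̄‖_M + ‖u‖_{L¹(Ω)} ) (inequality in [0,∞]). -/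
open MeasureTheory Filter Topology
open scoped ENNReal

noncomputable section

section AuxTV
variable {d : ℕ}

lemma hcs_of_support_subset {α β γ : Type*} [TopologicalSpace α] [Zero β] [Zero γ]
    {f : α → β} {g : α → γ} (hf : HasCompactSupport f)
    (h : Function.support g ⊆ tsupport f) : HasCompactSupport g :=
  IsCompact.of_isClosed_subset hf isClosed_closure (closure_minimal h (isClosed_tsupport f))

lemma abs_integral_le_abs {α : Type*} [MeasurableSpace α] {μ : MeasureTheory.Measure α}
    (f : α → ℝ) : |∫ x, f x ∂μ| ≤ ∫ x, |f x| ∂μ := by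
  simpa [Real.norm_eq_abs] using norm_integral_le_integral_norm (μ := μ) f

lemma abs_apply_le_enorm2 (v : Fin d → ℝ) (i : Fin d) : |v i| ≤ enorm2 v := by
  rw [enorm2, ← Real.sqrt_sq_eq_abs]
  exact Real.sqrt_le_sqrt (Finset.single_le_sum (fun j _ => sq_nonneg (v j)) (Finset.mem_univ i))

lemma fderiv_translate' {E : Type*} [NormedAddCommGroup E] [NormedSpace ℝ E]
    (f : E → ℝ) (hf : Differentiable ℝ f) (c x : E) :
    fderiv ℝ (fun y => f (y - c)) x = fderiv ℝ f (x - c) := by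
  have h1 : HasFDerivAt (fun y : E => y - c) (ContinuousLinearMap.id ℝ E) x :=
    (hasFDerivAt_id x).sub_const c
  have h3 := ((hf (x - c)).hasFDerivAt).comp x h1
  exact h3.fderiv

lemma pd_continuous {f : (Fin d → ℝ) → ℝ} (hf : ContDiff ℝ 1 f) (j : Fin d) :
    Continuous (pd j f) :=
  (ContinuousLinearMap.apply ℝ ℝ (Pi.single j 1)).continuous.comp (hf.continuous_fderiv (by norm_num))

lemma pd_eq_zero_of_not_mem {f : (Fin d → ℝ) → ℝ} {x : Fin d → ℝ}
    (h : x ∉ tsupport f) (j : Fin d) : pd j f x = 0 := by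
  have : fderiv ℝ f x = 0 := by
    by_contra hne
    exact h (support_fderiv_subset ℝ (by simpa [Function.mem_support] using hne))
  simp [pd, this]

lemma vdiv_continuous {φ : (Fin d → ℝ) → Fin d → ℝ} (hφ : ContDiff ℝ 1 φ) :
    Continuous (vdiv φ) := by
  unfold vdiv
  exact continuous_finset_sum _ (fun j _ => pd_continuous (contDiff_pi.mp hφ j) j)

lemma vdiv_eq_zero_of_not_mem {φ : (Fin d → ℝ) → Fin d → ℝ} {x : Fin d → ℝ}
    (h : x ∉ tsupport φ) : vdiv φ x = 0 := by
  unfold vdiv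
  refine Finset.sum_eq_zero fun j _ => pd_eq_zero_of_not_mem (fun hm => h ?_) j
  refine closure_mono ?_ hm
  intro y hy
  simp only [Function.mem_support] at hy ⊢
  exact fun h0 => hy (by rw [h0]; rfl)

lemma vdiv_hcs {φ : (Fin d → ℝ) → Fin d → ℝ} (hφc : HasCompactSupport φ) :
    HasCompactSupport (vdiv φ) := by
  refine hcs_of_support_subset hφc fun x hx => ?_
  by_contra h
  exact hx (vdiv_eq_zero_of_not_mem h)

lemma vdiv_neg (φ : (Fin d → ℝ) → Fin d → ℝ) (x : Fin d → ℝ) :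
    vdiv (fun y => -φ y) x = -vdiv φ x := by
  unfold vdiv pd
  rw [← Finset.sum_neg_distrib]
  refine Finset.sum_congr rfl fun j _ => ?_
  have : (fun y => (-φ y) j) = fun y => -(φ y j) := rfl
  rw [this, fderiv_fun_neg]
  simp

lemma TVtest_neg {Ω : Set (Fin d → ℝ)} {φ : (Fin d → ℝ) → Fin d → ℝ}
    (h : TVtest Ω φ) : TVtest Ω (fun x => -φ x) := by
  obtain ⟨h1, h2, h3, h4⟩ := h
  have hsupp : Function.support (fun x => -φ x) = Function.support φ := by
    ext x; simp [Function.mem_support]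
  have hts : tsupport (fun x => -φ x) = tsupport φ := by
    unfold tsupport; rw [hsupp]
  refine ⟨h1.neg, ?_, ?_, ?_⟩
  · unfold HasCompactSupport; rw [hts]; exact h2
  · rw [hts]; exact h3
  · intro x hx
    have : enorm2 (-φ x) = enorm2 (φ x) := by
      unfold enorm2; congr 1; refine Finset.sum_congr rfl fun i _ => ?_
      simp [even_two.neg_pow]
    simpa [this] using h4 x hx

lemma pairing_abs_le {Ω : Set (Fin d → ℝ)} {u : (Fin d → ℝ) → ℝ}
    {w : (Fin d → ℝ) → Fin d → ℝ} (hfin : MnormDuSub Ω u w ≠ ⊤)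
    {φ : (Fin d → ℝ) → Fin d → ℝ} (hφ : TVtest Ω φ) :
    |∫ x in Ω, (u x * vdiv φ x + ∑ i, w x i * φ x i)| ≤ (MnormDuSub Ω u w).toReal := by
  have key : ∀ φ' , TVtest Ω φ' →
      ENNReal.ofReal (∫ x in Ω, (u x * vdiv φ' x + ∑ i, w x i * φ' x i)) ≤ MnormDuSub Ω u w :=
    fun φ' hφ' => le_iSup₂ (f := fun v (_ : TVtest Ω v) =>
      ENNReal.ofReal (∫ x in Ω, (u x * vdiv v x + ∑ i, w x i * v x i))) φ' hφ'
  have h1 := key φ hφ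
  have h2 := key (fun x => -φ x) (TVtest_neg hφ)
  have e : (∫ x in Ω, (u x * vdiv (fun y => -φ y) x + ∑ i, w x i * (fun y => -φ y) x i))
      = -(∫ x in Ω, (u x * vdiv φ x + ∑ i, w x i * φ x i)) := by
    rw [← integral_neg]
    refine integral_congr_ae (Eventually.of_forall fun x => ?_)
    show u x * vdiv (fun y => -φ y) x + ∑ i, w x i * (-φ x i) = _
    rw [vdiv_neg]
    simp only [mul_neg, Finset.sum_neg_distrib]
    ring
  rw [e] at h2
  rcases abs_cases (∫ x in Ω, (u x * vdiv φ x + ∑ i, w x i * φ x i)) with ⟨habs, _⟩ | ⟨habs, _⟩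
  · rw [habs]; exact (ENNReal.ofReal_le_iff_le_toReal hfin).mp h1
  · rw [habs]; exact (ENNReal.ofReal_le_iff_le_toReal hfin).mp h2

end AuxTV

section BumpTV
open Metric
variable {d : ℕ} (ψb : ContDiffBump (0 : Fin d → ℝ))

lemma bump_zero_of_not_mem (c : Fin d → ℝ) {x : Fin d → ℝ}
    (h : x ∉ closedBall c ψb.rOut) : ψb (x - c) = 0 := by
  have hx : x - c ∉ Function.support ψb := by
    rw [ψb.support_eq, mem_ball_zero_iff]
    intro hlt
    exact h (by rw [mem_closedBall, dist_eq_norm]; exact hlt.le)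
  simpa [Function.mem_support, not_not] using hx

lemma enorm2_smul_single (t : ℝ) (i : Fin d) :
    enorm2 (t • (Pi.single i (1:ℝ) : Fin d → ℝ)) = |t| := by
  unfold enorm2
  have h : ∀ j : Fin d, ((t • (Pi.single i (1:ℝ) : Fin d → ℝ)) j)^2
      = if j = i then t^2 else 0 := by
    intro j
    by_cases hji : j = i <;> simp [hji, Pi.single_apply]
  rw [Finset.sum_congr rfl fun j _ => h j]
  simp [Real.sqrt_sq_eq_abs]

lemma bump_field_test {Ω : Set (Fin d → ℝ)} (c : Fin d → ℝ)
    (hc : closedBall c ψb.rOut ⊆ Ω) (i : Fin d) :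
    TVtest Ω (fun x => ψb (x - c) • (Pi.single i (1:ℝ) : Fin d → ℝ)) := by
  have hcd : ContDiff ℝ 1 (fun x : Fin d → ℝ => ψb (x - c)) :=
    ψb.contDiff.comp (contDiff_id.sub contDiff_const)
  have hzero : ∀ x ∉ closedBall c ψb.rOut,
      ψb (x - c) • (Pi.single i (1:ℝ) : Fin d → ℝ) = 0 := by
    intro x hx
    rw [bump_zero_of_not_mem ψb c hx, zero_smul]
  have hts : tsupport (fun x => ψb (x - c) • (Pi.single i (1:ℝ) : Fin d → ℝ))
      ⊆ closedBall c ψb.rOut := by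
    refine closure_minimal ?_ Metric.isClosed_closedBall
    intro x hx
    by_contra hmem
    exact hx (hzero x hmem)
  refine ⟨hcd.smul contDiff_const, ?_, hts.trans hc, ?_⟩
  · exact HasCompactSupport.intro (isCompact_closedBall c ψb.rOut) hzero
  · intro x _
    rw [enorm2_smul_single, abs_of_nonneg (ψb.nonneg)]
    exact ψb.le_one

lemma bump_field_vdiv (c : Fin d → ℝ) (i : Fin d) (x : Fin d → ℝ) :
    vdiv (fun y => ψb (y - c) • (Pi.single i (1:ℝ) : Fin d → ℝ)) x
      = fderiv ℝ (⇑ψb) (x - c) (Pi.single i 1) := by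
  have hdiff : Differentiable ℝ (⇑ψb) := (ψb.contDiff (n := 1)).differentiable (by norm_num)
  have hdat : ∀ y : Fin d → ℝ, DifferentiableAt ℝ (fun z : Fin d → ℝ => ψb (z - c)) y := by
    intro y
    exact DifferentiableAt.comp (g := ⇑ψb) (f := fun z : Fin d → ℝ => z - c) y (hdiff (y - c))
      ((differentiable_id.sub_const c) y)
  unfold vdiv pd
  have hstep : ∀ j : Fin d,
      fderiv ℝ (fun y => (ψb (y - c) • (Pi.single i (1:ℝ) : Fin d → ℝ)) j) x (Pi.single j 1)
        = (Pi.single i (1:ℝ) : Fin d → ℝ) j * fderiv ℝ (⇑ψb) (x - c) (Pi.single j 1) := by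
    intro j
    have he : (fun y => (ψb (y - c) • (Pi.single i (1:ℝ) : Fin d → ℝ)) j)
        = fun y => ψb (y - c) * (Pi.single i (1:ℝ) : Fin d → ℝ) j := by
      funext y; simp
    rw [he, fderiv_mul_const (hdat x), fderiv_translate' (⇑ψb) hdiff c x]
    simp [mul_comm]
  rw [Finset.sum_congr rfl fun j _ => hstep j]
  have : ∀ j : Fin d, (Pi.single i (1:ℝ) : Fin d → ℝ) j * fderiv ℝ (⇑ψb) (x - c) (Pi.single j 1)
      = if j = i then fderiv ℝ (⇑ψb) (x - c) (Pi.single j 1) else 0 := by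
    intro j; by_cases hji : j = i <;> simp [hji, Pi.single_apply]
  rw [Finset.sum_congr rfl fun j _ => this j, Finset.sum_ite_eq' Finset.univ i]
  simp

end BumpTV

set_option maxHeartbeats 1600000 in
/-- Uniform control of TV by the distance of `Du` to rigid displacements. -/
theorem tv_control_by_rigid {d : ℕ} (hd : 1 ≤ d) (Ω : Set (Fin d → ℝ))
    (hΩo : IsOpen Ω) (hΩb : Bornology.IsBounded Ω) (hΩc : IsConnected Ω) :
    ∃ C₁ : ℝ, 0 < C₁ ∧ ∀ u : (Fin d → ℝ) → ℝ, IntegrableOn u Ω →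
      ∀ A : Matrix (Fin d) (Fin d) ℝ, A.transpose = -A → ∀ b : Fin d → ℝ,
        TVar Ω u ≤ ENNReal.ofReal C₁ *
          (MnormDuSub Ω u (fun x => A.mulVec x + b)
            + ENNReal.ofReal (∫ x in Ω, |u x|)) := by
  classical
  obtain ⟨c₀, hc₀Ω⟩ := hΩc.nonempty
  obtain ⟨r₀, hr₀pos, hball⟩ := Metric.isOpen_iff.mp hΩo c₀ hc₀Ω
  obtain ⟨R, hΩR⟩ := hΩb.subset_closedBall 0
  set R' := max R 0 with hR'def
  have hΩR' : Ω ⊆ Metric.closedBall 0 R' :=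
    hΩR.trans (Metric.closedBall_subset_closedBall (le_max_left _ _))
  have hR'0 : (0:ℝ) ≤ R' := le_max_right _ _
  set ψb : ContDiffBump (0 : Fin d → ℝ) :=
    ⟨r₀/8, r₀/4, by positivity, by linarith⟩ with hψbdef
  have hrOut : ψb.rOut = r₀/4 := rfl
  have hI₀pos : 0 < ∫ y, ψb y := ψb.integral_pos
  set I₀ := ∫ y, ψb y with hI₀def
  have hψcont : Continuous ⇑ψb := ψb.continuous
  have hψint : Integrable ⇑ψb := hψcont.integrable_of_hasCompactSupport ψb.hasCompactSupport
  obtain ⟨K₀, hK₀⟩ := (ψb.hasCompactSupport.fderiv ℝ).exists_bound_of_continuous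
    ((ψb.contDiff (n := 2)).continuous_fderiv (by norm_num))
  set K := max K₀ 0 with hKdef
  have hK : ∀ y, ‖fderiv ℝ (⇑ψb) y‖ ≤ K := fun y => (hK₀ y).trans (le_max_left _ _)
  have hK0 : (0:ℝ) ≤ K := le_max_right _ _
  have hyjint : ∀ j : Fin d, Integrable (fun y : Fin d → ℝ => y j * ψb y) := by
    intro j
    refine ((continuous_apply j).mul hψcont).integrable_of_hasCompactSupport ?_
    refine hcs_of_support_subset ψb.hasCompactSupport fun y hy => subset_tsupport _ ?_
    simp only [Function.mem_support] at hy ⊢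
    exact fun h0 => hy (by simp [h0])
  set J : Fin d → ℝ := fun j => ∫ y, y j * ψb y with hJdef
  have hJbound : ∀ j, |J j| ≤ (r₀/4) * I₀ := by
    intro j
    have h1 : |∫ y, y j * ψb y| ≤ ∫ y, |y j * ψb y| :=
      abs_integral_le_abs (fun y : Fin d → ℝ => y j * ψb y)
    have h2 : (∫ y, |y j * ψb y|) ≤ ∫ y, (r₀/4) * ψb y := by
      refine integral_mono (hyjint j).abs (hψint.const_mul _) fun y => ?_
      rw [abs_mul, abs_of_nonneg ψb.nonneg]
      by_cases hy : ψb y = 0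
      · simp [hy, mul_nonneg (by positivity : (0:ℝ) ≤ r₀/4) ψb.nonneg]
      · have hmem : y ∈ Metric.ball (0 : Fin d → ℝ) ψb.rOut := by
          rw [← ψb.support_eq]; exact hy
        have hn : ‖y‖ < r₀/4 := by rw [← hrOut]; exact mem_ball_zero_iff.mp hmem
        have hyj : |y j| ≤ ‖y‖ := by simpa using norm_le_pi_norm y j
        exact mul_le_mul_of_nonneg_right ((hyj.trans hn.le)) ψb.nonneg
    rw [integral_const_mul] at h2
    exact (h1.trans h2).trans (le_of_eq rfl)
  have hvolfin : volume Ω < ⊤ := hΩb.measure_lt_top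
  set vol := (volume Ω).toReal with hvoldef
  have hvol0 : 0 ≤ vol := ENNReal.toReal_nonneg
  set B : ℝ := (1 + d)/I₀ + d * (4/(r₀ * I₀)) * (R' + ‖c₀‖) with hBdef
  have hB0 : 0 ≤ B := by positivity
  set C₁ : ℝ := 1 + vol * d * B * (1 + K) with hC₁def
  have hC₁pos : 0 < C₁ := by positivity
  refine ⟨C₁, hC₁pos, ?_⟩
  intro u hu A hAskew b
  set w : (Fin d → ℝ) → Fin d → ℝ := fun x => A.mulVec x + b with hwdef
  by_cases hfin : MnormDuSub Ω u w = ⊤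
  · rw [hfin, top_add, ENNReal.mul_top]
    · exact le_top
    · simp only [ne_eq, ENNReal.ofReal_eq_zero, not_le]
      exact hC₁pos
  set M := (MnormDuSub Ω u w).toReal with hMdef
  have hM0 : 0 ≤ M := ENNReal.toReal_nonneg
  set N := ∫ x in Ω, |u x| with hNdef
  have hN0 : 0 ≤ N := integral_nonneg fun x => abs_nonneg _
  set V := M + K * N with hVdef
  have hV0 : 0 ≤ V := by positivity
  have hwcont : Continuous w := by
    refine continuous_pi fun i => ?_
    have he : (fun x : Fin d → ℝ => w x i) = fun x => (∑ j, A i j * x j) + b i := by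
      funext x; simp [hwdef, Matrix.mulVec, dotProduct]
    rw [he]
    exact (continuous_finset_sum _ fun j _ => continuous_const.mul (continuous_apply j)).add
      continuous_const
  have hsplit : ∀ φ : (Fin d → ℝ) → Fin d → ℝ, TVtest Ω φ →
      IntegrableOn (fun x => u x * vdiv φ x) Ω ∧
        IntegrableOn (fun x => ∑ i, w x i * φ x i) Ω := by
    intro φ hφ
    obtain ⟨hφ1, hφ2, hφ3, hφ4⟩ := hφ
    constructor
    · obtain ⟨C, hC⟩ := (vdiv_hcs hφ2).exists_bound_of_continuous (vdiv_continuous hφ1)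
      have := hu.bdd_mul ((vdiv_continuous hφ1).aestronglyMeasurable.restrict) (Filter.Eventually.of_forall hC)
      exact this.congr (Filter.Eventually.of_forall fun x => mul_comm _ _)
    · have hcont : Continuous (fun x => ∑ i, w x i * φ x i) :=
        continuous_finset_sum _ fun i _ =>
          ((continuous_apply i).comp hwcont).mul ((continuous_apply i).comp hφ1.continuous)
      have hhcs : HasCompactSupport (fun x => ∑ i, w x i * φ x i) := by
        refine hcs_of_support_subset hφ2 fun x hx => subset_tsupport _ ?_
        simp only [Function.mem_support] at hx ⊢
        intro h0
        refine hx (Finset.sum_eq_zero fun i _ => ?_)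
        rw [h0]; simp
      exact (hcont.integrable_of_hasCompactSupport hhcs).integrableOn
  have hpair2 : ∀ φ : (Fin d → ℝ) → Fin d → ℝ, TVtest Ω φ →
      |(∫ x in Ω, u x * vdiv φ x) + ∫ x in Ω, ∑ i, w x i * φ x i| ≤ M := by
    intro φ hφ
    have h := pairing_abs_le hfin hφ (u := u) (w := w)
    rwa [integral_add (hsplit φ hφ).1 (hsplit φ hφ).2] at h
  have hKco : ∀ (c : Fin d → ℝ) (i : Fin d) (x : Fin d → ℝ),
      |vdiv (fun y => ψb (y - c) • (Pi.single i (1:ℝ) : Fin d → ℝ)) x| ≤ K := by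
    intro c i x
    rw [bump_field_vdiv]
    calc |fderiv ℝ (⇑ψb) (x - c) (Pi.single i 1)|
        ≤ ‖fderiv ℝ (⇑ψb) (x - c)‖ * ‖(Pi.single i (1:ℝ) : Fin d → ℝ)‖ := by
          simpa [Real.norm_eq_abs] using
            (fderiv ℝ (⇑ψb) (x - c)).le_opNorm (Pi.single i (1:ℝ) : Fin d → ℝ)
      _ ≤ K * 1 := by
          refine mul_le_mul (hK _) ?_ (norm_nonneg _) hK0
          rw [Pi.norm_single]; simp
      _ = K := mul_one K
  have hVc : ∀ c : Fin d → ℝ, Metric.closedBall c ψb.rOut ⊆ Ω → ∀ i : Fin d,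
      |(∑ j, A i j * J j) + w c i * I₀| ≤ V := by
    intro c hc i
    set φ := fun y => ψb (y - c) • (Pi.single i (1:ℝ) : Fin d → ℝ) with hφdef
    have hφ : TVtest Ω φ := bump_field_test ψb c hc i
    have h2 := hpair2 φ hφ
    have hA1 : |∫ x in Ω, u x * vdiv φ x| ≤ K * N := by
      calc |∫ x in Ω, u x * vdiv φ x| ≤ ∫ x in Ω, |u x * vdiv φ x| :=
            abs_integral_le_abs (fun x => u x * vdiv φ x)
        _ ≤ ∫ x in Ω, K * |u x| := by
            refine integral_mono (hsplit φ hφ).1.abs (hu.abs.const_mul K) fun x => ?_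
            rw [abs_mul, mul_comm]
            exact mul_le_mul_of_nonneg_right (hKco c i x) (abs_nonneg _)
        _ = K * N := by rw [integral_const_mul]
    have hA2 : |∫ x in Ω, ∑ i', w x i' * φ x i'| ≤ M + K * N := by
      have p2 := abs_le.mp h2
      have p1 := abs_le.mp hA1
      rw [abs_le]
      constructor <;> linarith [p2.1, p2.2, p1.1, p1.2]
    have hiden : (∫ x in Ω, ∑ i', w x i' * φ x i') = (∑ j, A i j * J j) + w c i * I₀ := by
      have hsum : ∀ x : Fin d → ℝ, (∑ i', w x i' * φ x i') = w x i * ψb (x - c) := by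
        intro x
        rw [hφdef, Finset.sum_eq_single i]
        · simp
        · intro j _ hj; simp [Pi.single_eq_of_ne hj]
        · intro h; exact absurd (Finset.mem_univ i) h
      have e1 : (∫ x in Ω, ∑ i', w x i' * φ x i') = ∫ x in Ω, w x i * ψb (x - c) :=
        integral_congr_ae (Filter.Eventually.of_forall fun x => hsum x)
      have e2 : (∫ x in Ω, w x i * ψb (x - c)) = ∫ x, w x i * ψb (x - c) := by
        refine setIntegral_eq_integral_of_forall_compl_eq_zero fun x hx => ?_
        rw [bump_zero_of_not_mem ψb c (fun hmem => hx (hc hmem)), mul_zero]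
      have e3 : (∫ x, w x i * ψb (x - c)) = ∫ y, w (y + c) i * ψb y := by
        rw [← integral_add_right_eq_self (fun x => w x i * ψb (x - c)) c]
        refine integral_congr_ae (Filter.Eventually.of_forall fun y => ?_)
        simp
      have hwc : ∀ y : Fin d → ℝ, w (y + c) i = (∑ j, A i j * y j) + w c i := by
        intro y
        simp only [hwdef, Pi.add_apply, Matrix.mulVec, dotProduct]
        rw [Finset.sum_congr rfl fun j (_ : j ∈ Finset.univ) =>
          mul_add (A i j) (y j) (c j), Finset.sum_add_distrib]
        ring
      have e4 : (∫ y, w (y + c) i * ψb y) = (∑ j, A i j * J j) + w c i * I₀ := by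
        have eint : ∀ y : Fin d → ℝ,
            w (y + c) i * ψb y = (∑ j, A i j * (y j * ψb y)) + w c i * ψb y := by
          intro y
          rw [hwc y, add_mul, Finset.sum_mul]
          refine congrArg (· + _) (Finset.sum_congr rfl fun j _ => mul_assoc _ _ _)
        rw [integral_congr_ae (Filter.Eventually.of_forall eint),
          integral_add (integrable_finset_sum _ fun j _ => (hyjint j).const_mul _)
            (hψint.const_mul _),
          integral_finset_sum _ (fun j _ => (hyjint j).const_mul _)]
        simp only [integral_const_mul]
        rfl
      rw [e1, e2, e3, e4]
    rw [hiden] at hA2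
    exact hA2
  have hcsub : ∀ c : Fin d → ℝ, ‖c - c₀‖ ≤ r₀/2 → Metric.closedBall c ψb.rOut ⊆ Ω := by
    intro c hcd x hx
    apply hball
    rw [Metric.mem_ball, dist_eq_norm]
    have h1 : ‖x - c‖ ≤ r₀/4 := by
      rw [← hrOut]; exact mem_closedBall_iff_norm.mp hx
    have h2 := norm_add_le (x - c) (c - c₀)
    rw [sub_add_sub_cancel] at h2
    linarith
  have hc₀sub : Metric.closedBall c₀ ψb.rOut ⊆ Ω := by
    refine hcsub c₀ ?_
    simp only [sub_self, norm_zero]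
    positivity
  have hAij : ∀ i m : Fin d, |A i m| ≤ 4 * V / (r₀ * I₀) := by
    intro i m
    set cm : Fin d → ℝ := c₀ + (r₀/2) • (Pi.single m (1:ℝ) : Fin d → ℝ) with hcmdef
    have hcmnorm : ‖cm - c₀‖ = r₀/2 := by
      rw [hcmdef, add_sub_cancel_left, norm_smul, Pi.norm_single]
      simp [abs_of_pos hr₀pos]
    have hcmsub := hcsub cm (le_of_eq hcmnorm)
    have h1 := hVc c₀ hc₀sub i
    have h2 := hVc cm hcmsub i
    have hdm : w cm i - w c₀ i = (r₀/2) * A i m := by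
      have hmv : A.mulVec cm i = A.mulVec c₀ i + (r₀/2) * A i m := by
        rw [hcmdef, Matrix.mulVec_add, Matrix.mulVec_smul]
        simp [Matrix.mulVec_single]
      simp only [hwdef, Pi.add_apply, hmv]
      ring
    have h3 : |(w cm i - w c₀ i) * I₀| ≤ 2 * V := by
      have he : (w cm i - w c₀ i) * I₀
          = ((∑ j, A i j * J j) + w cm i * I₀) - ((∑ j, A i j * J j) + w c₀ i * I₀) := by
        ring
      rw [he, abs_le]
      have p1 := abs_le.mp h1
      have p2 := abs_le.mp h2
      constructor <;> linarith [p1.1, p1.2, p2.1, p2.2]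
    rw [hdm, abs_mul, abs_mul, abs_of_pos hI₀pos, abs_of_pos (by positivity : (0:ℝ) < r₀/2)]
      at h3
    rw [le_div_iff₀ (by positivity)]
    nlinarith [abs_nonneg (A i m)]
  have hwc₀bound : ∀ i, |w c₀ i| ≤ (1 + d) * V / I₀ := by
    intro i
    have h1 := hVc c₀ hc₀sub i
    have hsumJ : |∑ j, A i j * J j| ≤ d * V := by
      calc |∑ j, A i j * J j| ≤ ∑ j, |A i j * J j| := Finset.abs_sum_le_sum_abs _ _
        _ ≤ ∑ _j : Fin d, V := by
            refine Finset.sum_le_sum fun j _ => ?_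
            rw [abs_mul]
            calc |A i j| * |J j| ≤ (4 * V / (r₀ * I₀)) * ((r₀/4) * I₀) :=
                  mul_le_mul (hAij i j) (hJbound j) (abs_nonneg _) (by positivity)
              _ = V := by field_simp
        _ = d * V := by simp [Finset.sum_const, Finset.card_univ, mul_comm]
    have h2 : |w c₀ i| * I₀ ≤ (1 + d) * V := by
      have he : |w c₀ i * I₀| = |w c₀ i| * I₀ := by
        rw [abs_mul, abs_of_pos hI₀pos]
      have p1 := abs_le.mp h1
      have p2 := abs_le.mp hsumJ
      rw [← he, abs_le]
      constructor <;> linarith [p1.1, p1.2, p2.1, p2.2]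
    rw [le_div_iff₀ hI₀pos]
    exact h2
  have hWbound : ∀ x ∈ Ω, ∀ i, |w x i| ≤ B * V := by
    intro x hx i
    have hxR : ∀ j, |x j - c₀ j| ≤ R' + ‖c₀‖ := by
      intro j
      have h1 : |x j| ≤ R' := by
        have hxmem : ‖x‖ ≤ R' := by
          have := hΩR' hx
          rwa [Metric.mem_closedBall, dist_zero_right] at this
        exact (by simpa using norm_le_pi_norm x j : |x j| ≤ ‖x‖).trans hxmem
      have h2 : |c₀ j| ≤ ‖c₀‖ := by simpa using norm_le_pi_norm c₀ j
      calc |x j - c₀ j| = |x j + -(c₀ j)| := by rw [sub_eq_add_neg]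
        _ ≤ |x j| + |(-(c₀ j))| := abs_add_le _ _
        _ = |x j| + |c₀ j| := by rw [abs_neg]
        _ ≤ R' + ‖c₀‖ := add_le_add h1 h2
    have hdecomp : w x i = w c₀ i + ∑ j, A i j * (x j - c₀ j) := by
      simp only [hwdef, Pi.add_apply, Matrix.mulVec, dotProduct]
      rw [Finset.sum_congr rfl fun j (_ : j ∈ Finset.univ) =>
        mul_sub (A i j) (x j) (c₀ j), Finset.sum_sub_distrib]
      ring
    rw [hdecomp]
    have hsumbound : |∑ j, A i j * (x j - c₀ j)|
        ≤ d * ((4 * V / (r₀ * I₀)) * (R' + ‖c₀‖)) := by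
      calc |∑ j, A i j * (x j - c₀ j)| ≤ ∑ j, |A i j * (x j - c₀ j)| :=
            Finset.abs_sum_le_sum_abs _ _
        _ ≤ ∑ _j : Fin d, (4 * V / (r₀ * I₀)) * (R' + ‖c₀‖) := by
            refine Finset.sum_le_sum fun j _ => ?_
            rw [abs_mul]
            exact mul_le_mul (hAij i j) (hxR j) (abs_nonneg _) (by positivity)
        _ = d * ((4 * V / (r₀ * I₀)) * (R' + ‖c₀‖)) := by
            simp [Finset.sum_const, Finset.card_univ, mul_comm]
    calc |w c₀ i + ∑ j, A i j * (x j - c₀ j)|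
        ≤ |w c₀ i| + |∑ j, A i j * (x j - c₀ j)| := abs_add_le _ _
      _ ≤ (1 + d) * V / I₀ + d * ((4 * V / (r₀ * I₀)) * (R' + ‖c₀‖)) :=
          add_le_add (hwc₀bound i) hsumbound
      _ = B * V := by rw [hBdef]; field_simp
  refine iSup₂_le fun φ hφ => ?_
  have hreal : (∫ x in Ω, u x * vdiv φ x) ≤ C₁ * (M + N) := by
    have h2 := hpair2 φ hφ
    have h3 : |∫ x in Ω, ∑ i, w x i * φ x i| ≤ (d * (B * V)) * vol := by
      have hcont : Continuous (fun x => ∑ i, w x i * φ x i) :=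
        continuous_finset_sum _ fun i _ =>
          ((continuous_apply i).comp hwcont).mul ((continuous_apply i).comp hφ.1.continuous)
      have := norm_setIntegral_le_of_norm_le_const (C := d * (B * V))
        (f := fun x => ∑ i, w x i * φ x i) hvolfin
        (fun x hx => ?_)
      · simpa [Real.norm_eq_abs, hvoldef, Measure.real] using this
      · rw [Real.norm_eq_abs]
        calc |∑ i, w x i * φ x i| ≤ ∑ i, |w x i * φ x i| := Finset.abs_sum_le_sum_abs _ _
          _ ≤ ∑ _i : Fin d, B * V := by
              refine Finset.sum_le_sum fun i _ => ?_
              rw [abs_mul]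
              have hφi : |φ x i| ≤ 1 :=
                (abs_apply_le_enorm2 (φ x) i).trans (hφ.2.2.2 x hx)
              calc |w x i| * |φ x i| ≤ (B * V) * 1 :=
                    mul_le_mul (hWbound x hx i) hφi (abs_nonneg _)
                      (mul_nonneg hB0 hV0)
                _ = B * V := mul_one _
          _ = d * (B * V) := by simp [Finset.sum_const, Finset.card_univ, mul_comm]
    have p2 := abs_le.mp h2
    have p3 := abs_le.mp h3
    have h4 : (∫ x in Ω, u x * vdiv φ x) ≤ M + (d * (B * V)) * vol := by
      linarith [p2.1, p2.2, p3.1, p3.2]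
    have h5 : M + (d * (B * V)) * vol ≤ C₁ * (M + N) := by
      rw [hC₁def, hVdef]
      have hc0 : (0:ℝ) ≤ vol * (d:ℝ) * B := by positivity
      nlinarith [mul_nonneg hc0 hN0, mul_nonneg (mul_nonneg hc0 hK0) hM0]
    linarith
  calc ENNReal.ofReal (∫ x in Ω, u x * vdiv φ x)
      ≤ ENNReal.ofReal (C₁ * (M + N)) := ENNReal.ofReal_le_ofReal hreal
    _ = ENNReal.ofReal C₁ * ENNReal.ofReal (M + N) := ENNReal.ofReal_mul hC₁pos.le
    _ ≤ ENNReal.ofReal C₁ * (ENNReal.ofReal M + ENNReal.ofReal N) :=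
        mul_le_mul_right ENNReal.ofReal_add_le _
    _ = ENNReal.ofReal C₁ * (MnormDuSub Ω u w + ENNReal.ofReal N) := by
        rw [hMdef, ENNReal.ofReal_toReal hfin]

end
end

section
/- Kernel of the symmetrized derivative (rigid displacements): let Ω ⊆ ℝ^d be a nonempty connected open set and let w : Ω → ℝ^d be continuously differentiable with ½(∇w(x) + ∇w(x)ᵀ) = 0 for every x ∈ Ω. Then there exist a skew-symmetric matrix A ∈ ℝ^{d×d} (Aᵀ = −A) and b ∈ ℝ^d such that w(x) = A x + b for all x ∈ Ω. -/
open MeasureTheory Filter Topology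
open scoped ENNReal

noncomputable section

private lemma clm_repr {d : ℕ} (L : (Fin d → ℝ) →L[ℝ] ℝ) (v : Fin d → ℝ) :
    L v = ∑ j, v j * L (Pi.single j 1) := by
  have hv : v = ∑ j, v j • (Pi.single j 1 : Fin d → ℝ) := by
    ext k
    simp [Finset.sum_apply, Pi.single_apply]
  conv_lhs => rw [hv]
  rw [map_sum]
  simp [smul_eq_mul]

private lemma skew_quad {d : ℕ} (a : Fin d → Fin d → ℝ) (v : Fin d → ℝ)
    (h : ∀ i j, a i j + a j i = 0) : ∑ i, (∑ j, v j * a i j) * v i = 0 := by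
  have h1 : ∑ i, (∑ j, v j * a i j) * v i = ∑ i, ∑ j, v j * a i j * v i := by
    simp [Finset.sum_mul]
  have h2 : ∑ i : Fin d, ∑ j : Fin d, v j * a i j * v i
      = ∑ j : Fin d, ∑ i : Fin d, v j * a i j * v i := Finset.sum_comm
  have h3 : (∑ i, (∑ j, v j * a i j) * v i) + (∑ i, (∑ j, v j * a i j) * v i)
      = ∑ i, ∑ j, (a i j + a j i) * (v j * v i) := by
    rw [h1]
    nth_rewrite 2 [h2]
    rw [← Finset.sum_add_distrib]
    refine Finset.sum_congr rfl fun i _ => ?_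
    rw [← Finset.sum_add_distrib]
    refine Finset.sum_congr rfl fun j _ => ?_
    ring
  have h4 : ∑ i : Fin d, ∑ j : Fin d, ((a i j + a j i) * (v j * v i)) = 0 := by
    simp [h]
  linarith

private lemma comp_hasfd {d : ℕ} {Ω : Set (Fin d → ℝ)} (hΩo : IsOpen Ω)
    {w : (Fin d → ℝ) → Fin d → ℝ} (hw : ContDiffOn ℝ 1 w Ω)
    {z : Fin d → ℝ} (hz : z ∈ Ω) (i : Fin d) :
    HasFDerivAt (fun u => w u i) (fderiv ℝ (fun u => w u i) z) z :=
  ((differentiableAt_pi.mp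
    ((hw.contDiffAt (hΩo.mem_nhds hz)).differentiableAt one_ne_zero)) i).hasFDerivAt

private lemma ortho {d : ℕ} {Ω : Set (Fin d → ℝ)} (hΩo : IsOpen Ω)
    {w : (Fin d → ℝ) → Fin d → ℝ} (hw : ContDiffOn ℝ 1 w Ω)
    (hsym : ∀ x ∈ Ω, ∀ i j, pd j (fun y => w y i) x + pd i (fun y => w y j) x = 0)
    {c : Fin d → ℝ} {r : ℝ} (hball : Metric.ball c r ⊆ Ω)
    {x y : Fin d → ℝ} (hx : x ∈ Metric.ball c r) (hy : y ∈ Metric.ball c r) :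
    ∑ i, (w y i - w x i) * (y i - x i) = 0 := by
  set v : Fin d → ℝ := fun i => y i - x i with hvdef
  set γ : ℝ → (Fin d → ℝ) := fun t => x + t • (y - x) with hγdef
  have hmem : ∀ t ∈ Set.Icc (0:ℝ) 1, γ t ∈ Metric.ball c r := by
    intro t ht
    have h := (convex_ball c r) hx hy (by linarith [ht.2] : (0:ℝ) ≤ 1 - t) ht.1 (by ring)
    have : γ t = (1 - t) • x + t • y := by
      ext j
      simp [hγdef, smul_eq_mul]
      ring
    rw [this]; exact h
  set g : ℝ → ℝ := fun t => ∑ i, w (γ t) i * v i with hgdef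
  have hg : ∀ t ∈ Set.Icc (0:ℝ) 1, HasDerivAt g 0 t := by
    intro t ht
    have hγt : γ t ∈ Metric.ball c r := hmem t ht
    have hγΩ : γ t ∈ Ω := hball hγt
    have hγ' : HasDerivAt γ (y - x) t := by
      have h1 : HasDerivAt (fun s : ℝ => s • (y - x)) ((1:ℝ) • (y - x)) t :=
        (hasDerivAt_id t).smul_const (y - x)
      have h2 := h1.const_add x; rw [one_smul] at h2; exact h2
    have hsum : HasDerivAt g
        (∑ i, fderiv ℝ (fun u => w u i) (γ t) (y - x) * v i) t := by
      apply HasDerivAt.fun_sum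
      intro i _
      exact (((comp_hasfd hΩo hw hγΩ i).comp_hasDerivAt t hγ')).mul_const (v i)
    have hzero : (∑ i, fderiv ℝ (fun u => w u i) (γ t) (y - x) * v i) = 0 := by
      have hrepr : ∀ i, fderiv ℝ (fun u => w u i) (γ t) (y - x)
          = ∑ j, v j * pd j (fun u => w u i) (γ t) := by
        intro i
        rw [clm_repr]
        refine Finset.sum_congr rfl fun j _ => ?_
        simp [pd, hvdef]
      calc ∑ i, fderiv ℝ (fun u => w u i) (γ t) (y - x) * v i
          = ∑ i, (∑ j, v j * pd j (fun u => w u i) (γ t)) * v i := by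
            exact Finset.sum_congr rfl fun i _ => by rw [hrepr]
        _ = 0 := skew_quad _ v fun i j => hsym (γ t) hγΩ i j
    rw [← hzero]
    exact hsum
  have hconst := constant_of_has_deriv_right_zero
    (fun t ht => (hg t ht).continuousAt.continuousWithinAt)
    (fun t ht => ((hg t (Set.Ico_subset_Icc_self ht)).hasDerivWithinAt))
    1 (Set.right_mem_Icc.2 zero_le_one)
  have hγ1 : γ 1 = y := by ext j; simp [hγdef]
  have hγ0 : γ 0 = x := by ext j; simp [hγdef]
  have : ∑ i, w y i * v i = ∑ i, w x i * v i := by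
    have := hconst
    rw [hgdef] at this
    simpa [hγ1, hγ0] using this
  calc ∑ i, (w y i - w x i) * (y i - x i)
      = ∑ i, (w y i * v i - w x i * v i) := by
        refine Finset.sum_congr rfl fun i _ => ?_; simp [hvdef]; ring
    _ = ∑ i, w y i * v i - ∑ i, w x i * v i := Finset.sum_sub_distrib _ _
    _ = 0 := by rw [this]; ring

private lemma key_formula {d : ℕ} {Ω : Set (Fin d → ℝ)} (hΩo : IsOpen Ω)
    {w : (Fin d → ℝ) → Fin d → ℝ} (hw : ContDiffOn ℝ 1 w Ω)
    (hsym : ∀ x ∈ Ω, ∀ i j, pd j (fun y => w y i) x + pd i (fun y => w y j) x = 0)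
    {c : Fin d → ℝ} {r : ℝ} (hball : Metric.ball c r ⊆ Ω)
    {x y : Fin d → ℝ} (hx : x ∈ Metric.ball c r) (hy : y ∈ Metric.ball c r) (k : Fin d) :
    w y k = w x k + ∑ i, pd i (fun z => w z k) y * (y i - x i) := by
  set F : (Fin d → ℝ) → ℝ := fun z => ∑ i, (w z i - w x i) * (z i - x i) with hFdef
  set L : (Fin d → ℝ) →L[ℝ] ℝ :=
    ∑ i, ((w y i - w x i) • ContinuousLinearMap.proj i
      + (y i - x i) • fderiv ℝ (fun z => w z i) y) with hLdef
  have hyΩ : y ∈ Ω := hball hy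
  have hL : HasFDerivAt F L y := by
    apply HasFDerivAt.fun_sum
    intro i _
    have h1 : HasFDerivAt (fun z : Fin d → ℝ => w z i - w x i)
        (fderiv ℝ (fun z => w z i) y) y := (comp_hasfd hΩo hw hyΩ i).sub_const (w x i)
    have h2 : HasFDerivAt (fun z : Fin d → ℝ => z i - x i)
        (ContinuousLinearMap.proj (R := ℝ) (φ := fun _ : Fin d => ℝ) i) y := by
      have h3 := (ContinuousLinearMap.proj (R := ℝ) (φ := fun _ : Fin d => ℝ) i).hasFDerivAt (x := y)
      exact h3.sub_const (x i)
    exact h1.mul h2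
  have hzero : HasFDerivAt F (0 : (Fin d → ℝ) →L[ℝ] ℝ) y := by
    apply (hasFDerivAt_const (0:ℝ) y).congr_of_eventuallyEq
    filter_upwards [Metric.isOpen_ball.mem_nhds hy] with z hz
    exact ortho hΩo hw hsym hball hx hz
  have hL0 : L = 0 := hL.unique hzero
  have happ := congrArg (fun (M : (Fin d → ℝ) →L[ℝ] ℝ) => M (Pi.single k 1)) hL0
  simp only [hLdef, ContinuousLinearMap.sum_apply, ContinuousLinearMap.add_apply,
    ContinuousLinearMap.smul_apply, ContinuousLinearMap.proj_apply,
    ContinuousLinearMap.zero_apply, smul_eq_mul] at happ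
  have hpart1 : ∑ i, ((w y i - w x i) * (Pi.single k 1 : Fin d → ℝ) i
      + (y i - x i) * fderiv ℝ (fun z => w z i) y (Pi.single k 1))
      = (w y k - w x k) + ∑ i, (y i - x i) * pd k (fun z => w z i) y := by
    rw [Finset.sum_add_distrib]
    congr 1
    · simp [Pi.single_apply, mul_ite]
  rw [hpart1] at happ
  have hswap : ∀ i, pd k (fun z => w z i) y = - pd i (fun z => w z k) y := by
    intro i
    have := hsym y hyΩ i k
    linarith
  have : (w y k - w x k) + ∑ i, (y i - x i) * (- pd i (fun z => w z k) y) = 0 := by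
    rw [← happ]
    congr 1
    exact Finset.sum_congr rfl fun i _ => by rw [hswap]
  have hsum : ∑ i, (y i - x i) * (- pd i (fun z => w z k) y)
      = - ∑ i, pd i (fun z => w z k) y * (y i - x i) := by
    rw [← Finset.sum_neg_distrib]
    exact Finset.sum_congr rfl fun i _ => by ring
  rw [hsum] at this
  linarith

private lemma local_aff {d : ℕ} {Ω : Set (Fin d → ℝ)} (hΩo : IsOpen Ω)
    {w : (Fin d → ℝ) → Fin d → ℝ} (hw : ContDiffOn ℝ 1 w Ω)
    (hsym : ∀ x ∈ Ω, ∀ i j, pd j (fun y => w y i) x + pd i (fun y => w y j) x = 0)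
    {c : Fin d → ℝ} {r : ℝ} (hr : 0 < r) (hball : Metric.ball c r ⊆ Ω) :
    ∀ y ∈ Metric.ball c r,
      (∀ k m, pd m (fun z => w z k) y = pd m (fun z => w z k) c) ∧
      (∀ k, w y k = w c k + ∑ i, pd i (fun z => w z k) c * (y i - c i)) := by
  have hc : c ∈ Metric.ball c r := Metric.mem_ball_self hr
  have haff : ∀ z ∈ Metric.ball c r, ∀ k,
      w z k = w c k + ∑ i, pd i (fun u => w u k) c * (z i - c i) := by
    intro z hz k
    have h := key_formula hΩo hw hsym hball hz hc k
    have h2 : ∑ i, pd i (fun u => w u k) c * (c i - z i)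
        = - ∑ i, pd i (fun u => w u k) c * (z i - c i) := by
      rw [← Finset.sum_neg_distrib]
      exact Finset.sum_congr rfl fun i _ => by ring
    rw [h2] at h
    linarith
  intro y hy
  refine ⟨?_, fun k => haff y hy k⟩
  intro k m
  set a : Fin d → ℝ := fun i => pd i (fun z => w z k) c with hadef
  have hφ : HasFDerivAt (fun z : Fin d → ℝ => w c k + ∑ i, a i * (z i - c i))
      (∑ i, a i • ContinuousLinearMap.proj (R := ℝ) (φ := fun _ : Fin d => ℝ) i) y := by
    apply HasFDerivAt.const_add
    apply HasFDerivAt.fun_sum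
    intro i _
    have h3 := (ContinuousLinearMap.proj (R := ℝ) (φ := fun _ : Fin d => ℝ) i).hasFDerivAt (x := y)
    exact (h3.sub_const (c i)).const_mul (a i)
  have heq : (fun z => w z k) =ᶠ[𝓝 y] (fun z => w c k + ∑ i, a i * (z i - c i)) := by
    filter_upwards [Metric.isOpen_ball.mem_nhds hy] with z hz
    exact haff z hz k
  have hwk : HasFDerivAt (fun z => w z k)
      (∑ i, a i • ContinuousLinearMap.proj (R := ℝ) (φ := fun _ : Fin d => ℝ) i) y :=
    hφ.congr_of_eventuallyEq heq
  have hval : pd m (fun z => w z k) y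
      = (∑ i, a i • ContinuousLinearMap.proj (R := ℝ) (φ := fun _ : Fin d => ℝ) i)
          (Pi.single m 1) := by
    rw [pd, hwk.fderiv]
  rw [hval]
  simp [ContinuousLinearMap.sum_apply, Pi.single_apply, mul_ite, hadef]


/-- Kernel of the symmetrized derivative: a `C¹` vector field with
`½(∇w + ∇wᵀ) = 0` on a nonempty connected open set is a rigid displacement
`w(x) = A x + b` with `A` skew-symmetric. -/
theorem rigid_displacement_kernel {d : ℕ} (Ω : Set (Fin d → ℝ))
    (hΩo : IsOpen Ω) (hΩc : IsConnected Ω)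
    (w : (Fin d → ℝ) → Fin d → ℝ) (hw : ContDiffOn ℝ 1 w Ω)
    (hsym : ∀ x ∈ Ω, ∀ i j, pd j (fun y => w y i) x + pd i (fun y => w y j) x = 0) :
    ∃ (A : Matrix (Fin d) (Fin d) ℝ) (b : Fin d → ℝ), A.transpose = -A ∧
      ∀ x ∈ Ω, w x = A.mulVec x + b := by
  obtain ⟨x₀, hx₀⟩ := hΩc.nonempty
  set A : Matrix (Fin d) (Fin d) ℝ :=
    Matrix.of (fun k i => pd i (fun z => w z k) x₀) with hAdef
  set b : Fin d → ℝ := fun k => w x₀ k - ∑ i, A k i * x₀ i with hbdef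
  refine ⟨A, b, ?_, ?_⟩
  · ext i j
    simp only [hAdef, Matrix.transpose_apply, Matrix.neg_apply, Matrix.of_apply]
    have := hsym x₀ hx₀ i j
    linarith
  · set P : (Fin d → ℝ) → Prop := fun x =>
      (∀ k i, pd i (fun z => w z k) x = A k i) ∧
      (∀ k, w x k - ∑ i, A k i * x i = b k) with hPdef
    have hloc : ∀ x ∈ Ω, ∃ r > 0, Metric.ball x r ⊆ Ω ∧
        ∀ y ∈ Metric.ball x r, (P x ↔ P y) := by
      intro x hx
      obtain ⟨r, hr, hball⟩ := Metric.isOpen_iff.mp hΩo x hx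
      refine ⟨r, hr, hball, ?_⟩
      intro y hy
      obtain ⟨hpd, haff⟩ := local_aff hΩo hw hsym hr hball y hy
      constructor
      · rintro ⟨hP1, hP2⟩
        refine ⟨fun k i => by rw [hpd k i, hP1 k i], fun k => ?_⟩
        have hk := haff k
        have hs : ∑ i, pd i (fun z => w z k) x * (y i - x i)
            = ∑ i, A k i * y i - ∑ i, A k i * x i := by
          rw [← Finset.sum_sub_distrib]
          refine Finset.sum_congr rfl fun i _ => ?_
          rw [hP1 k i]; ring
        rw [hs] at hk
        have := hP2 k
        linarith
      · rintro ⟨hP1, hP2⟩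
        refine ⟨fun k i => by rw [← hpd k i, hP1 k i], fun k => ?_⟩
        have hk := haff k
        have hs : ∑ i, pd i (fun z => w z k) x * (y i - x i)
            = ∑ i, A k i * y i - ∑ i, A k i * x i := by
          rw [← Finset.sum_sub_distrib]
          refine Finset.sum_congr rfl fun i _ => ?_
          rw [← hpd k i, hP1 k i]; ring
        rw [hs] at hk
        have := hP2 k
        linarith
    set U := {x | x ∈ Ω ∧ P x} with hUdef
    set V := {x | x ∈ Ω ∧ ¬ P x} with hVdef
    have hUopen : IsOpen U := by
      rw [Metric.isOpen_iff]
      rintro x ⟨hxΩ, hxP⟩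
      obtain ⟨r, hr, hball, hiff⟩ := hloc x hxΩ
      exact ⟨r, hr, fun y hy => ⟨hball hy, (hiff y hy).mp hxP⟩⟩
    have hVopen : IsOpen V := by
      rw [Metric.isOpen_iff]
      rintro x ⟨hxΩ, hxP⟩
      obtain ⟨r, hr, hball, hiff⟩ := hloc x hxΩ
      exact ⟨r, hr, fun y hy => ⟨hball hy, fun hPy => hxP ((hiff y hy).mpr hPy)⟩⟩
    have hdisj : Disjoint U V := Set.disjoint_left.mpr (fun x hx hx' => hx'.2 hx.2)
    have hsub : Ω ⊆ U ∪ V := fun x hx =>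
      (em (P x)).elim (fun h => Or.inl ⟨hx, h⟩) (fun h => Or.inr ⟨hx, h⟩)
    have hPx₀ : P x₀ := ⟨fun k i => rfl, fun k => rfl⟩
    have hne : (Ω ∩ U).Nonempty := ⟨x₀, hx₀, hx₀, hPx₀⟩
    have hΩU := (hΩc.isPreconnected).subset_left_of_subset_union hUopen hVopen hdisj hsub hne
    intro x hx
    obtain ⟨-, hP1, hP2⟩ := hΩU hx
    funext k
    have hk := hP2 k
    simp only [Pi.add_apply, Matrix.mulVec, dotProduct]
    linarith


end
end
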